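/- Let K_n have vertices v_1,...,v_n with f(v_1) ≤ ... ≤ f(v_n), positive integers. Let x(f) = (x_1,...,x_n) with x_i = f(v_i) − i, and let m = ψ(x(f)), the number of x(f)-dominated monotone lattice paths ending at (x_n, n). Then the join G = K_n ⊕ K̄_m with list sizes f^(m) (f on K_n, and n on each vertex of K̄_m) is not f^(m)-choosable: there is a list assignment L with |L(v_i)| = f(v_i) and |L(u)| = n for u in K̄_m admitting no proper colouring from the lists. -/

import Mathlib

lemma aux_card_count (s : List Bool) :
    ((Finset.range s.length).filter (fun j => s.getD j false = true)).card = s.count true := by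
  induction s using List.reverseRecOn with
  | nil => simp
  | append_singleton t b ih =>
    rw [List.length_append, List.length_singleton, Finset.range_add_one, Finset.filter_insert]
    have h1 : ∀ j ∈ Finset.range t.length,
        ((t ++ [b]).getD j false = true) = (t.getD j false = true) := by
      intro j hj
      rw [List.getD_append _ _ _ _ (Finset.mem_range.mp hj)]
    rw [Finset.filter_congr (fun j hj => by rw [h1 j hj])]
    have h2 : (t ++ [b]).getD t.length false = b := by
      rw [List.getD_eq_getElem _ _ (by simp)]
      simp
    rw [List.count_append]
    simp only [List.getD_eq_getElem?_getD] at ih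
    cases b <;> simp [h2, ih]

def trues (s : List Bool) : Finset ℕ :=
  ((Finset.range s.length).filter (fun j => s.getD j false = true)).image Nat.succ

lemma trues_card (s : List Bool) : (trues s).card = s.count true := by
  rw [trues, Finset.card_image_of_injective _ Nat.succ_injective, aux_card_count]


/-- A monotone lattice path (`true` = up, `false` = right) dominated by an integer vector
`x = (x_1, …, x_n)` and ending at `(x n, n)`. -/
def DominatedZ (n : ℕ) (x : ℕ → ℤ) (s : List Bool) : Prop :=
  s.count true = n ∧ (s.count false : ℤ) = x n ∧
    ∀ k, (s.take k).count true < n →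
      ((s.take k).count false : ℤ) ≤ x ((s.take k).count true + 1)

/-- The number of `x`-dominated monotone lattice paths from `(0,0)` to `(x n, n)`. -/
noncomputable def psiZ (n : ℕ) (x : ℕ → ℤ) : ℕ :=
  Set.ncard {s : List Bool | DominatedZ n x s}

/-- A graph `G` with list sizes `f` is `f`-choosable if every list assignment with the
prescribed list sizes admits a proper colouring from the lists. -/
def Choosable {V : Type*} (G : SimpleGraph V) (f : V → ℕ) : Prop :=
  ∀ L : V → Finset ℕ, (∀ v, (L v).card = f v) →
    ∃ c : V → ℕ, (∀ v, c v ∈ L v) ∧ ∀ ⦃u v⦄, G.Adj u v → c u ≠ c v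

/-- The join `G ⊕ K̄_m` of a graph `G` with the edgeless graph on `m` vertices. -/
def joinK {V : Type*} (G : SimpleGraph V) (m : ℕ) : SimpleGraph (V ⊕ Fin m) where
  Adj a b :=
    match a, b with
    | Sum.inl u, Sum.inl v => G.Adj u v
    | Sum.inl _, Sum.inr _ => True
    | Sum.inr _, Sum.inl _ => True
    | Sum.inr _, Sum.inr _ => False
  symm := by
    constructor
    rintro (u | i) (v | j) h
    · exact G.adj_symm h
    · trivial
    · trivial
    · exact h
  loopless := by
    constructor
    rintro (u | i) h
    · exact G.loopless.irrefl u h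
    · exact h

/-- Let `K_n` have vertices `v_1, …, v_n` (vertex `k : Fin n` being `v_{k+1}`) with
positive list sizes `f(v_1) ≤ … ≤ f(v_n)`, and let `m = ψ(x(f))` where
`x(f)_i = f(v_i) − i`. Then `K_n ⊕ K̄_m`, with list size `n` on each of the `m`
independent vertices, is not choosable. -/
theorem stmt_13 (n : ℕ) (hn : 0 < n) (f : ℕ → ℕ)
    (hpos : ∀ i, 1 ≤ i → i ≤ n → 0 < f i)
    (hmono : ∀ i, 1 ≤ i → i < n → f i ≤ f (i + 1)) :
    ¬ Choosable
        (joinK (SimpleGraph.completeGraph (Fin n)) (psiZ n (fun i => (f i : ℤ) - i)))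
        (Sum.elim (fun k : Fin n => f ((k : ℕ) + 1)) fun _ => n) := by
  set x : ℕ → ℤ := fun i => (f i : ℤ) - i with hxdef
  set m : ℕ := psiZ n x with hmdef
  -- monotone
  have hmono' : ∀ i j, 1 ≤ i → i ≤ j → j ≤ n → f i ≤ f j := by
    intro i j hi hij hjn
    induction j with
    | zero => exact absurd (le_trans hi hij) (by omega)
    | succ j ih =>
      rcases eq_or_lt_of_le hij with rfl | hlt
      · exact le_refl _
      · exact le_trans (ih (by omega) (by omega)) (hmono j (by omega) (by omega))
  -- finiteness of the path set
  set S : Set (List Bool) := {s | DominatedZ n x s} with hSdef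
  have hSfin : S.Finite := by
    apply (List.finite_length_eq Bool (n + ((f n : ℤ) - n).toNat)).subset
    rintro s ⟨h1, h2, -⟩
    have hsum : s.count true + s.count false = s.length := List.count_add_count_not s true
    have h2' : (s.count false : ℤ) = (f n : ℤ) - n := h2
    simp only [Set.mem_setOf_eq]
    omega
  set T : Finset (List Bool) := hSfin.toFinset with hTdef
  have hmcard : T.card = m := (Set.ncard_eq_toFinset_card S hSfin).symm
  intro hch
  -- the list assignment
  set L : Fin n ⊕ Fin m → Finset ℕ :=
    Sum.elim (fun k : Fin n => Finset.Icc 1 (f ((k : ℕ) + 1)))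
      (fun i : Fin m => trues ((T.equivFin.symm (Fin.cast hmcard.symm i) : List Bool))) with hLdef
  have hLcard : ∀ v, (L v).card = Sum.elim (fun k : Fin n => f ((k : ℕ) + 1)) (fun _ => n) v := by
    rintro (k | i)
    · simp [hLdef, Nat.card_Icc]
    · simp only [hLdef, Sum.elim_inr]
      have hsS : (T.equivFin.symm (Fin.cast hmcard.symm i) : List Bool) ∈ S :=
        (Set.Finite.mem_toFinset hSfin).mp (T.equivFin.symm (Fin.cast hmcard.symm i)).2
      have hd : DominatedZ n x (T.equivFin.symm (Fin.cast hmcard.symm i) : List Bool) := hsS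
      rw [trues_card]
      exact hd.1
  obtain ⟨c, hcmem, hcprop⟩ := hch L hLcard
  -- injectivity of colours on K_n
  have hcinj : Function.Injective (fun k : Fin n => c (Sum.inl k)) := by
    intro a b hab
    by_contra hne
    exact hcprop (u := Sum.inl a) (v := Sum.inl b) (by simpa [joinK, SimpleGraph.completeGraph] using hne) hab
  set C : Finset ℕ := Finset.univ.image (fun k : Fin n => c (Sum.inl k)) with hCdef
  have hCcard : C.card = n := by
    rw [hCdef, Finset.card_image_of_injective _ hcinj, Finset.card_univ, Fintype.card_fin]
  have hCmem : ∀ y ∈ C, 1 ≤ y ∧ y ≤ f n := by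
    intro y hy
    rw [hCdef, Finset.mem_image] at hy
    obtain ⟨k, -, rfl⟩ := hy
    have h1 := hcmem (Sum.inl k)
    simp only [hLdef, Sum.elim_inl, Finset.mem_Icc] at h1
    exact ⟨h1.1, le_trans h1.2 (hmono' ((k : ℕ) + 1) n (by omega) k.2 le_rfl)⟩
  -- key counting claim
  have hkey : ∀ t, t < n → t + 1 ≤ (C.filter (fun y => y ≤ f (t + 1))).card := by
    intro t ht
    have := Finset.card_le_card_of_injOn (f := fun j => c (Sum.inl ⟨j % n, Nat.mod_lt j hn⟩))
      (s := Finset.range (t + 1)) (t := C.filter (fun y => y ≤ f (t + 1)))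
      (by
        intro j hj
        rw [Finset.mem_coe, Finset.mem_range] at hj
        have hjn : j < n := by omega
        rw [Finset.mem_coe, Finset.mem_filter]
        constructor
        · rw [hCdef]; exact Finset.mem_image_of_mem _ (Finset.mem_univ _)
        · have h1 := hcmem (Sum.inl ⟨j % n, Nat.mod_lt j hn⟩)
          simp only [hLdef, Sum.elim_inl, Finset.mem_Icc] at h1
          refine le_trans h1.2 ?_
          have : j % n = j := Nat.mod_eq_of_lt hjn
          rw [this]
          exact hmono' (j + 1) (t + 1) (by omega) (by omega) (by omega))
      (by
        intro a ha b hb hab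
        rw [Finset.coe_range, Set.mem_Iio] at ha hb
        have := hcinj hab
        have ha' : a % n = a := Nat.mod_eq_of_lt (by omega)
        have hb' : b % n = b := Nat.mod_eq_of_lt (by omega)
        have := Fin.mk.inj_iff.mp this
        omega)
    simpa using this
  -- the path associated to C
  set M : ℕ := f n with hMdef
  set sC : List Bool := (List.range M).map (fun j => decide ((j + 1) ∈ C)) with hsCdef
  have hlen : sC.length = M := by simp [hsCdef]
  have hCsub : C ⊆ Finset.Icc 1 M := fun y hy => Finset.mem_Icc.mpr (hCmem y hy)
  have hnM : n ≤ M := by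
    calc n = C.card := hCcard.symm
    _ ≤ (Finset.Icc 1 M).card := Finset.card_le_card hCsub
    _ = M := by rw [Nat.card_Icc]; omega
  have hgetD : ∀ j < M, sC.getD j false = decide ((j + 1) ∈ C) := by
    intro j hj
    rw [List.getD_eq_getElem _ _ (by rw [hlen]; exact hj)]
    simp [hsCdef]
  have htrues : trues sC = C := by
    ext y
    simp only [trues, Finset.mem_image, Finset.mem_filter, Finset.mem_range, hlen]
    constructor
    · rintro ⟨j, ⟨hj, hjt⟩, rfl⟩
      rw [hgetD j hj] at hjt
      simpa using hjt
    · intro hy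
      obtain ⟨hy1, hy2⟩ := hCmem y hy
      refine ⟨y - 1, ⟨by omega, ?_⟩, by omega⟩
      rw [hgetD (y - 1) (by omega)]
      have : y - 1 + 1 = y := by omega
      rw [this]
      simpa using hy
  have hct : sC.count true = n := by
    rw [← trues_card, htrues, hCcard]
  have hcf : sC.count true + sC.count false = M := by
    have := List.count_add_count_not sC true
    simpa [hlen] using this
  -- take counts
  have htake : ∀ k, ((sC.take k).count true < n) →
      ((sC.take k).count false : ℤ) ≤ x ((sC.take k).count true + 1) := by
    intro k hk
    set p : List Bool := sC.take k with hpdef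
    set k' : ℕ := min k M with hk'def
    have hplen : p.length = k' := by rw [hpdef, List.length_take, hlen]
    have hpget : ∀ j < k', p.getD j false = decide ((j + 1) ∈ C) := by
      intro j hj
      rw [hpdef, List.getD_eq_getElem _ _ (by rw [List.length_take, hlen]; exact hj),
        List.getElem_take]
      rw [← List.getD_eq_getElem sC false (by rw [hlen]; omega)]
      exact hgetD j (by omega)
    set t : ℕ := p.count true with htdef
    have hpsum : t + p.count false = k' := by
      have h := List.count_add_count_not p true
      simp only [Bool.not_true] at h
      rw [hplen] at h
      exact h
    have hcardt : ((Finset.range k').filter (fun j => (j + 1) ∈ C)).card = t := by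
      rw [htdef, ← aux_card_count p, hplen]
      congr 1
      apply Finset.filter_congr
      intro j hj
      rw [Finset.mem_range] at hj
      rw [hpget j hj]
      simp
    have hk'lt : k' < f (t + 1) := by
      by_contra hge
      push_neg at hge
      have h1 := hkey t hk
      have h2 := Finset.card_le_card_of_injOn (f := fun y => y - 1)
        (s := C.filter (fun y => y ≤ f (t + 1))) (t := (Finset.range k').filter (fun j => (j + 1) ∈ C))
        (by
          intro y hy
          dsimp only
          rw [Finset.mem_coe, Finset.mem_filter] at hy
          obtain ⟨hyC, hyle⟩ := hy
          obtain ⟨hy1, -⟩ := hCmem y hyC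
          rw [Finset.mem_coe, Finset.mem_filter, Finset.mem_range]
          constructor
          · omega
          · have : y - 1 + 1 = y := by omega
            rw [this]; exact hyC)
        (by
          intro a ha b hb hab
          dsimp only at hab
          simp only [Finset.coe_filter, Set.mem_setOf_eq] at ha hb
          have h1 := hCmem a ha.1
          have h2 := hCmem b hb.1
          omega)
      rw [hcardt] at h2
      omega
    have htk : t ≤ k' := by omega
    show (p.count false : ℤ) ≤ (f (t + 1) : ℤ) - ((t + 1 : ℕ) : ℤ)
    omega
  have hsCS : sC ∈ S :=
    ⟨hct, show (sC.count false : ℤ) = (f n : ℤ) - (n : ℤ) by omega, htake⟩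
  -- the bad vertex
  have hsCT : sC ∈ T := (Set.Finite.mem_toFinset hSfin).mpr hsCS
  set i₀ : Fin m := Fin.cast hmcard (T.equivFin ⟨sC, hsCT⟩) with hi₀
  have hLi₀ : L (Sum.inr i₀) = C := by
    rw [hLdef]
    simp only [Sum.elim_inr, hi₀, Fin.cast_cast, Fin.cast_eq_self]
    rw [Equiv.symm_apply_apply]
    exact htrues
  have hmem := hcmem (Sum.inr i₀)
  rw [hLi₀, hCdef, Finset.mem_image] at hmem
  obtain ⟨k, -, hk⟩ := hmem
  exact hcprop (u := Sum.inl k) (v := Sum.inr i₀) trivial hk
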